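/- Fix k ≥ 2 and let B_{k,k-2} ∈ A denote the coefficient of w^{2^{k-2}} in e_k(w). If e_k(w) divides p_k(w) in K[w], then the quotient R_k(w) := p_k(w)/e_k(w) satisfies R_k(w) = a_k·e_k(w) + C, where C = a_{k-1} + a_k·B_{k,k-2}²; equivalently, p_k(w) = a_k·e_k(w)² + (a_{k-1} + a_k·B_{k,k-2}²)·e_k(w). (In the notation d_j = 1/a_j this reads R_k = e_k/d_k + C with C = 1/d_{k-1} + B_{k,k-2}²/d_k.) -/

import Mathlib

noncomputable section

open Polynomial
open scoped Classical

/-- The defining polynomial `Y² + Y + (X³ + X + 1)` over `𝔽₂[X]`,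
viewed as a polynomial in `Y` with coefficients in `𝔽₂[X]`. -/
def curveEq : Polynomial (Polynomial (ZMod 2)) :=
  X ^ 2 + X + C (X ^ 3 + X + 1)

/-- The ring `A = 𝔽₂[X,Y]/(Y² + Y + X³ + X + 1)`. -/
abbrev A : Type := AdjoinRoot curveEq

/-- The image `x` of `X` in `A`. -/
def aX : A := AdjoinRoot.of curveEq (X : Polynomial (ZMod 2))

/-- The image `y` of `Y` in `A`. -/
def aY : A := AdjoinRoot.root curveEq

/-- The bracket `[j]_x = x^{2^j} + x ∈ A`. -/
def brX (j : ℕ) : A := aX ^ 2 ^ j + aX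

/-- The monomials `xⁱyʲ` with `j ∈ {0,1}` and `2i + 3j < k`. -/
def monoSet (k : ℕ) : Finset A :=
  ((Finset.range k ×ˢ Finset.range 2).filter fun p => 2 * p.1 + 3 * p.2 < k).image
    fun p => aX ^ p.1 * aY ^ p.2

/-- `A_{<k}` : the `𝔽₂`-linear span of the monomials `xⁱyʲ` with `j ∈ {0,1}`
and `2i + 3j < k`, realized as the finite set of all subset sums. -/
def Alt (k : ℕ) : Finset A := (monoSet k).powerset.image fun s => s.sum id

/-- `t_k := x^{k/2}` if `k` is even, `t_k := y·x^{(k-3)/2}` if `k` is odd. -/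
def tk (k : ℕ) : A := if Even k then aX ^ (k / 2) else aY * aX ^ ((k - 3) / 2)

/-- `e_k(w) := ∏_{a ∈ A_{<k}} (w + a) ∈ A[w]`. -/
def ePoly (k : ℕ) : Polynomial A := ∏ a ∈ Alt k, (X + C a)

/-- `D_k := e_k(t_k)`, the product of all monic elements of `A` of degree `k`. -/
def Dk (k : ℕ) : A := (ePoly k).eval (tk k)

variable (K : Type) [Field K] [Algebra A K]

/-- The coefficients `a_j = 1/d_j` of the exponential function:
`a₀ = a₁ = 1` and `a_j = ([1]_x·a_{j-1}² + a_{j-2}⁴)/[j]_x` for `j ≥ 2`. -/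
def aSeq : ℕ → K
  | 0 => 1
  | 1 => 1
  | (j + 2) =>
      (algebraMap A K (brX 1) * (aSeq (j + 1)) ^ 2 + (aSeq j) ^ 4) /
        algebraMap A K (brX (j + 2))

/-- The coefficients `b_j = 1/ℓ_j` of the logarithm function:
`b₀ = b₁ = 1` and `b_j = ([1]_x^{2^{j-1}}·b_{j-1} + b_{j-2})/[j]_x` for `j ≥ 2`. -/
def bSeq : ℕ → K
  | 0 => 1
  | 1 => 1
  | (j + 2) =>
      (algebraMap A K (brX 1) ^ 2 ^ (j + 1) * bSeq (j + 1) + bSeq j) /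
        algebraMap A K (brX (j + 2))

/-- `p_k(w) := Σ_{j=0}^{k} a_j·b_{k-j}^{2^j}·w^{2^j} ∈ K[w]`. -/
def pPoly (k : ℕ) : Polynomial K :=
  ∑ j ∈ Finset.range (k + 1), C (aSeq K j * (bSeq K (k - j)) ^ 2 ^ j) * X ^ 2 ^ j

/-- `S_{n,r}(x₁,…,x_n) := Σ_{n ≥ i₁ > i₂ > … > i_r ≥ 1} ∏_{j=1}^{r}
x_{i_j}^{2^{n-j+1-i_j}}`, with `S_{n,0} = 1` and `S_{n,r} = 0` for `r > n`. -/
def Ssum (R : Type*) [CommRing R] (n r : ℕ) (x : ℕ → R) : R :=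
  ∑ f ∈ Finset.univ.filter
      (fun f : Fin r → Fin (n + 1) => StrictAnti f ∧ ∀ j, 1 ≤ (f j : ℕ)),
    ∏ j : Fin r, x (f j) ^ 2 ^ (n - (j : ℕ) - (f j : ℕ))


/-! ### Auxiliary material for `stmt9` -/

section AuxGeneric

set_option linter.unusedSectionVars false

/-- The set of subset sums of a finite set. -/
def sumSet {R : Type*} [AddCommMonoid R] (S : Finset R) : Finset R :=
  S.powerset.image fun s => s.sum id

/-- `𝔽₂`-independence: no nonempty subset sums to zero. -/
def IndepSet {R : Type*} [AddCommMonoid R] (S : Finset R) : Prop :=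
  ∀ s ⊆ S, s.sum id = 0 → s = ∅

lemma mem_sumSet_iff {R : Type*} [AddCommMonoid R] {S : Finset R} {x : R} :
    x ∈ sumSet S ↔ ∃ s ⊆ S, s.sum id = x := by
  simp [sumSet, Finset.mem_image, Finset.mem_powerset]

variable {F : Type*} [Field F] [CharP F 2]

/-- A polynomial with coefficients supported on powers of two. -/
def Supp2 (f : Polynomial F) : Prop := ∀ i, f.coeff i ≠ 0 → ∃ j, i = 2 ^ j

lemma two_zero : (2 : F) = 0 := by
  have := CharP.cast_eq_zero F 2; simpa using this

lemma sumSet_add_mem {S : Finset F} {u v : F} (hu : u ∈ sumSet S) (hv : v ∈ sumSet S) :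
    u + v ∈ sumSet S := by
  rw [mem_sumSet_iff] at hu hv ⊢
  obtain ⟨s, hs, rfl⟩ := hu
  obtain ⟨t, ht, rfl⟩ := hv
  refine ⟨(s \ t) ∪ (t \ s), Finset.union_subset ((Finset.sdiff_subset).trans hs)
    ((Finset.sdiff_subset).trans ht), ?_⟩
  rw [Finset.sum_union disjoint_sdiff_sdiff]
  have h1 : (s \ t).sum id = s.sum id - (s ∩ t).sum id := by
    rw [← Finset.sdiff_inter_self_left s t]
    exact Finset.sum_sdiff_eq_sub (Finset.inter_subset_left)
  have h2 : (t \ s).sum id = t.sum id - (t ∩ s).sum id := by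
    rw [← Finset.sdiff_inter_self_left t s]
    exact Finset.sum_sdiff_eq_sub (Finset.inter_subset_left)
  have h3 : (t ∩ s).sum id = (s ∩ t).sum id := by rw [Finset.inter_comm]
  rw [h1, h2, h3]
  ring_nf
  linear_combination (-(s ∩ t).sum id) * (two_zero (F := F))

lemma sumSet_insert {S : Finset F} {b : F} (hb : b ∉ S) :
    sumSet (insert b S) = sumSet S ∪ (sumSet S).image (b + ·) := by
  unfold sumSet
  rw [Finset.powerset_insert, Finset.image_union, Finset.image_image, Finset.image_image]
  congr 1
  apply Finset.image_congr
  intro s hs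
  simp only [Finset.mem_coe, Finset.mem_powerset] at hs
  simp only [Function.comp_apply]
  exact Finset.sum_insert (fun h => hb (hs h))

lemma indep_not_mem_sumSet {S : Finset F} {b : F} (hb : b ∉ S)
    (h : IndepSet (insert b S)) : b ∉ sumSet S := by
  intro hmem
  rw [mem_sumSet_iff] at hmem
  obtain ⟨s, hsS, hsum⟩ := hmem
  have hbs : b ∉ s := fun h' => hb (hsS h')
  have h0 : (insert b s).sum id = 0 := by
    rw [Finset.sum_insert hbs]
    simp only [id_eq] at hsum ⊢
    rw [hsum]
    linear_combination b * (two_zero (F := F))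
  have := h (insert b s) (Finset.insert_subset_insert _ hsS) h0
  exact Finset.insert_ne_empty _ _ this

lemma coeff_sq (f : Polynomial F) (n : ℕ) :
    (f ^ 2).coeff n = if 2 ∣ n then (f.coeff (n / 2)) ^ 2 else 0 := by
  have h := Polynomial.map_frobenius_expand 2 f
  rw [← h, Polynomial.coeff_map, Polynomial.coeff_expand (by norm_num : 0 < 2)]
  split_ifs with h1
  · rw [frobenius_def]
  · rw [map_zero]

lemma comp_X_add_C {f : Polynomial F} (hf : Supp2 f) (b : F) :
    f.comp (X + C b) = f + C (f.eval b) := by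
  rw [Polynomial.eval_eq_sum, Polynomial.sum_def]
  conv_lhs => rw [f.as_sum_support]
  rw [Polynomial.sum_comp]
  have key : ∀ i ∈ f.support,
      (monomial i (f.coeff i)).comp (X + C b) =
        monomial i (f.coeff i) + C (f.coeff i * b ^ i) := by
    intro i hi
    obtain ⟨j, rfl⟩ := hf i (Polynomial.mem_support_iff.mp hi)
    rw [Polynomial.monomial_comp, add_pow_char_pow, ← C_pow,
      ← Polynomial.C_mul_X_pow_eq_monomial, mul_add, ← C_mul]
  rw [Finset.sum_congr rfl key, Finset.sum_add_distrib, ← map_sum C, ← f.as_sum_support]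

/-- The product `∏ (X + a)` over a finite set. -/
def prodLin (V : Finset F) : Polynomial F := ∏ a ∈ V, (X + C a)

lemma prodLin_monic (V : Finset F) : (prodLin V).Monic :=
  monic_prod_of_monic _ _ fun a _ => monic_X_add_C a

lemma prodLin_natDegree (V : Finset F) : (prodLin V).natDegree = V.card := by
  rw [prodLin, Polynomial.natDegree_prod _ _ (fun a _ => (monic_X_add_C a).ne_zero)]
  simp [Polynomial.natDegree_X_add_C]

lemma main_ind (S : Finset F) (h : IndepSet S) :
    (sumSet S).card = 2 ^ S.card ∧ Supp2 (prodLin (sumSet S)) := by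
  induction S using Finset.induction_on with
  | empty =>
    have hV : sumSet (∅ : Finset F) = {0} := by
      simp [sumSet]
    constructor
    · simp [hV]
    · intro i hi
      rw [hV] at hi
      simp only [prodLin, Finset.prod_singleton, map_zero, add_zero] at hi
      rw [Polynomial.coeff_X] at hi
      refine ⟨0, ?_⟩
      by_contra hne
      exact hi (by rw [if_neg (fun hh => hne (by omega))])
  | @insert b S hb ih =>
    have hS : IndepSet S := fun s hs => h s (hs.trans (Finset.subset_insert _ _))
    obtain ⟨hcard, hsupp⟩ := ih hS
    have hbV : b ∉ sumSet S := indep_not_mem_sumSet hb h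
    have hins := sumSet_insert (F := F) hb
    have hdisj : Disjoint (sumSet S) ((sumSet S).image (b + ·)) := by
      rw [Finset.disjoint_left]
      intro v hv hv2
      obtain ⟨w, hw, hvw⟩ := Finset.mem_image.mp hv2
      apply hbV
      have hbvw : b = v + w := by
        rw [← hvw]; ring_nf
        linear_combination (-w) * (two_zero (F := F))
      rw [hbvw]
      exact sumSet_add_mem hv hw
    constructor
    · rw [hins, Finset.card_union_of_disjoint hdisj,
        Finset.card_image_of_injective _ (add_right_injective b),
        Finset.card_insert_of_notMem hb, hcard, pow_succ]
      ring
    · have hdec : prodLin (sumSet (insert b S)) =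
          prodLin (sumSet S) ^ 2 +
            C ((prodLin (sumSet S)).eval b) * prodLin (sumSet S) := by
        rw [hins, prodLin, Finset.prod_union hdisj,
          Finset.prod_image (fun a _ a' _ hh => by exact add_right_injective b hh)]
        have step : ∀ a ∈ sumSet S,
            (X + C (b + a) : Polynomial F) = (X + C a).comp (X + C b) := by
          intro a _
          simp [Polynomial.add_comp, map_add]
          ring
        rw [Finset.prod_congr rfl step, ← Polynomial.prod_comp, ← prodLin,
          comp_X_add_C hsupp]
        ring
      rw [hdec]
      intro i hi
      rw [Polynomial.coeff_add, Polynomial.coeff_C_mul, coeff_sq] at hi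
      by_cases hPi : (prodLin (sumSet S)).coeff i = 0
      · rw [hPi, mul_zero, add_zero] at hi
        by_cases h2 : 2 ∣ i
        · rw [if_pos h2] at hi
          have hne : (prodLin (sumSet S)).coeff (i / 2) ≠ 0 := by
            intro hz; rw [hz] at hi; exact hi (by ring)
          obtain ⟨j, hj⟩ := hsupp _ hne
          obtain ⟨m, rfl⟩ := h2
          rw [Nat.mul_div_cancel_left m (by norm_num)] at hj
          exact ⟨j + 1, by rw [pow_succ, hj]; ring⟩
        · rw [if_neg h2] at hi
          exact absurd rfl hi
      · exact hsupp i hPi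

lemma sumSet_image {R S : Type*} [CommRing R] [CommRing S] (φ : R →+* S)
    (hφ : Function.Injective φ) (T : Finset R) :
    sumSet (T.image φ) = (sumSet T).image φ := by
  classical
  ext x
  simp only [mem_sumSet_iff, Finset.mem_image]
  constructor
  · rintro ⟨s, hsub, rfl⟩
    obtain ⟨u, hu, rfl⟩ := Finset.subset_image_iff.mp hsub
    refine ⟨u.sum id, ⟨u, hu, rfl⟩, ?_⟩
    rw [Finset.sum_image (fun a _ b _ h => hφ h)]
    simp [map_sum]
  · rintro ⟨y, ⟨s, hsub, rfl⟩, rfl⟩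
    refine ⟨s.image φ, Finset.image_subset_image hsub, ?_⟩
    rw [Finset.sum_image (fun a _ b _ h => hφ h)]
    simp [map_sum]

lemma indep_image {R S : Type*} [CommRing R] [CommRing S] (φ : R →+* S)
    (hφ : Function.Injective φ) (T : Finset R) (h : IndepSet T) :
    IndepSet (T.image φ) := by
  classical
  intro s hsub hz
  obtain ⟨u, hu, rfl⟩ := Finset.subset_image_iff.mp hsub
  rw [Finset.sum_image (fun a _ b _ hh => hφ hh)] at hz
  simp only [id_eq] at hz
  have h1 : φ (u.sum id) = 0 := by rw [map_sum]; simpa using hz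
  have hu0 : u.sum id = 0 := hφ (by rw [h1, map_zero])
  rw [h u hu hu0]
  simp

end AuxGeneric

section AuxASide

lemma curve_degree : curveEq.degree = 2 := by
  unfold curveEq
  compute_degree!

lemma repr_zero (P Q : Polynomial (ZMod 2))
    (h : AdjoinRoot.of curveEq P + AdjoinRoot.of curveEq Q * aY = 0) : P = 0 ∧ Q = 0 := by
  have hmk : AdjoinRoot.mk curveEq (C P + C Q * X) = 0 := by
    rw [map_add, map_mul, AdjoinRoot.mk_C, AdjoinRoot.mk_X]
    exact h
  rw [AdjoinRoot.mk_eq_zero] at hmk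
  have h0 : (C P + C Q * X : Polynomial (Polynomial (ZMod 2))) = 0 := by
    refine Polynomial.eq_zero_of_dvd_of_degree_lt hmk ?_
    rw [curve_degree]
    refine lt_of_le_of_lt (Polynomial.degree_add_le _ _) ?_
    rw [max_lt_iff]
    constructor
    · exact lt_of_le_of_lt Polynomial.degree_C_le (by norm_num)
    · refine lt_of_le_of_lt (Polynomial.degree_mul_le _ _) ?_
      refine lt_of_le_of_lt (add_le_add Polynomial.degree_C_le Polynomial.degree_X_le) ?_
      norm_num
  constructor
  · have := congrArg (fun q => Polynomial.coeff q 0) h0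
    simpa using this
  · have := congrArg (fun q => Polynomial.coeff q 1) h0
    simpa using this

lemma of_injective : Function.Injective (AdjoinRoot.of curveEq) := by
  intro P Q h
  have h0 : AdjoinRoot.of curveEq (P - Q) + AdjoinRoot.of curveEq 0 * aY = 0 := by
    rw [map_sub, h, map_zero, zero_mul, add_zero, sub_self]
  have := (repr_zero _ _ h0).1
  exact sub_eq_zero.mp this

lemma aX_pow (i : ℕ) : aX ^ i = AdjoinRoot.of curveEq (X ^ i) := by
  rw [map_pow]; rfl

lemma mono_inj : ∀ i i' j j' : ℕ, j < 2 → j' < 2 →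
    aX ^ i * aY ^ j = aX ^ i' * aY ^ j' → i = i' ∧ j = j' := by
  have hXpow : ∀ m m' : ℕ, (X : Polynomial (ZMod 2)) ^ m = X ^ m' → m = m' := by
    intro m m' hh
    have := congrArg Polynomial.natDegree hh
    simpa [Polynomial.natDegree_X_pow] using this
  have hXne : ∀ m : ℕ, (X : Polynomial (ZMod 2)) ^ m ≠ 0 :=
    fun m => pow_ne_zero m Polynomial.X_ne_zero
  intro i i' j j' hj hj' h
  interval_cases j <;> interval_cases j' <;>
    simp only [pow_zero, pow_one, mul_one] at h
  · rw [aX_pow, aX_pow] at h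
    exact ⟨hXpow _ _ (of_injective h), rfl⟩
  · rw [aX_pow, aX_pow] at h
    exfalso
    have h0 : AdjoinRoot.of curveEq (X ^ i) + AdjoinRoot.of curveEq (-(X ^ i')) * aY = 0 := by
      rw [map_neg, neg_mul, ← h]; ring
    have := (repr_zero _ _ h0).2
    exact hXne i' (neg_eq_zero.mp this)
  · rw [aX_pow, aX_pow] at h
    exfalso
    have h0 : AdjoinRoot.of curveEq (X ^ i') + AdjoinRoot.of curveEq (-(X ^ i)) * aY = 0 := by
      rw [map_neg, neg_mul, h]; ring
    have := (repr_zero _ _ h0).2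
    exact hXne i (neg_eq_zero.mp this)
  · rw [aX_pow, aX_pow] at h
    have h0 : AdjoinRoot.of curveEq 0 + AdjoinRoot.of curveEq (X ^ i - X ^ i') * aY = 0 := by
      rw [map_zero, zero_add, map_sub, sub_mul, h]; ring
    have := (repr_zero _ _ h0).2
    exact ⟨hXpow _ _ (sub_eq_zero.mp this), rfl⟩

lemma sum_X_pow_eq_zero {I : Finset ℕ} (hz : (∑ i ∈ I, (X : Polynomial (ZMod 2)) ^ i) = 0) :
    I = ∅ := by
  by_contra hne
  obtain ⟨m, hm⟩ := Finset.nonempty_of_ne_empty hne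
  have h1 : (∑ i ∈ I, (X : Polynomial (ZMod 2)) ^ i).coeff m = 1 := by
    rw [Polynomial.finset_sum_coeff,
      Finset.sum_congr rfl (fun i _ => Polynomial.coeff_X_pow i m),
      Finset.sum_ite_eq I m (fun _ => (1 : ZMod 2)), if_pos hm]
  rw [hz] at h1
  simp at h1

lemma indep_monoSet (k : ℕ) : IndepSet (monoSet k) := by
  classical
  intro s hs hsum
  rw [monoSet] at hs
  obtain ⟨u, hu, rfl⟩ := Finset.subset_image_iff.mp hs
  have hmem : ∀ p ∈ u, p.2 < 2 := by
    intro p hp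
    have := hu hp
    simp only [Finset.mem_filter, Finset.mem_product, Finset.mem_range] at this
    exact this.1.2
  have hinj : ∀ p ∈ u, ∀ q ∈ u, aX ^ p.1 * aY ^ p.2 = aX ^ q.1 * aY ^ q.2 → p = q := by
    intro p hp q hq hpq
    have := mono_inj p.1 q.1 p.2 q.2 (hmem p hp) (hmem q hq) hpq
    exact Prod.ext this.1 this.2
  rw [Finset.sum_image hinj] at hsum
  simp only [id_eq] at hsum
  rw [← Finset.sum_filter_add_sum_filter_not u (fun p => p.2 = 0)] at hsum
  set u0 := u.filter (fun p => p.2 = 0) with hu0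
  set u1 := u.filter (fun p => ¬ p.2 = 0) with hu1
  have h0 : ∑ p ∈ u0, aX ^ p.1 * aY ^ p.2 = AdjoinRoot.of curveEq (∑ p ∈ u0, X ^ p.1) := by
    rw [map_sum]
    refine Finset.sum_congr rfl fun p hp => ?_
    have h2 : p.2 = 0 := (Finset.mem_filter.mp hp).2
    rw [h2, pow_zero, mul_one, aX_pow]
  have h1 : ∑ p ∈ u1, aX ^ p.1 * aY ^ p.2 =
      AdjoinRoot.of curveEq (∑ p ∈ u1, X ^ p.1) * aY := by
    rw [map_sum, Finset.sum_mul]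
    refine Finset.sum_congr rfl fun p hp => ?_
    have h2 : p.2 = 1 := by
      have ha := (Finset.mem_filter.mp hp).2
      have hb := hmem p (Finset.mem_filter.mp hp).1
      omega
    rw [h2, pow_one, aX_pow]
  rw [h0, h1] at hsum
  obtain ⟨hP0, hP1⟩ := repr_zero _ _ hsum
  have hfst0 : ∀ p ∈ u0, ∀ q ∈ u0, p.1 = q.1 → p = q := by
    intro p hp q hq hh
    exact Prod.ext hh (by
      rw [(Finset.mem_filter.mp hp).2, (Finset.mem_filter.mp hq).2])
  have hfst1 : ∀ p ∈ u1, ∀ q ∈ u1, p.1 = q.1 → p = q := by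
    intro p hp q hq hh
    have e1 : p.2 = 1 := by
      have := (Finset.mem_filter.mp hp).2; have := hmem p (Finset.mem_filter.mp hp).1; omega
    have e2 : q.2 = 1 := by
      have := (Finset.mem_filter.mp hq).2; have := hmem q (Finset.mem_filter.mp hq).1; omega
    exact Prod.ext hh (by rw [e1, e2])
  have hz0 : (∑ i ∈ u0.image Prod.fst, (X : Polynomial (ZMod 2)) ^ i) = 0 := by
    rw [Finset.sum_image hfst0]; exact hP0
  have hz1 : (∑ i ∈ u1.image Prod.fst, (X : Polynomial (ZMod 2)) ^ i) = 0 := by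
    rw [Finset.sum_image hfst1]; exact hP1
  have e0 : u0 = ∅ := Finset.image_eq_empty.mp (sum_X_pow_eq_zero hz0)
  have e1 : u1 = ∅ := Finset.image_eq_empty.mp (sum_X_pow_eq_zero hz1)
  have hu' : u = ∅ := by
    rw [← Finset.filter_union_filter_not_eq (fun p => p.2 = 0) u, ← hu0, ← hu1, e0, e1]
    simp
  rw [hu']
  simp

lemma card_monoSet (k : ℕ) (hk : 2 ≤ k) : (monoSet k).card = k - 1 := by
  classical
  rw [monoSet]
  rw [Finset.card_image_of_injOn (by
    intro p hp q hq hpq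
    simp only [Finset.coe_filter, Set.mem_setOf_eq, Finset.mem_product,
      Finset.mem_range] at hp hq
    have := mono_inj p.1 q.1 p.2 q.2 hp.1.2 hq.1.2 hpq
    exact Prod.ext this.1 this.2)]
  rw [Finset.card_filter, Finset.sum_product]
  have hstep : ∀ i ∈ Finset.range k, (∑ j ∈ Finset.range 2,
      if 2 * i + 3 * j < k then (1 : ℕ) else 0) =
      ((if 2 * i < k then (1 : ℕ) else 0) + (if 2 * i + 3 < k then (1 : ℕ) else 0)) := by
    intro i _
    rw [Finset.sum_range_succ, Finset.sum_range_one]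
    norm_num
  rw [Finset.sum_congr rfl hstep, Finset.sum_add_distrib, ← Finset.card_filter,
    ← Finset.card_filter]
  have e1 : (Finset.range k).filter (fun i => 2 * i < k) = Finset.range ((k + 1) / 2) := by
    ext i
    simp only [Finset.mem_filter, Finset.mem_range]
    omega
  have e2 : (Finset.range k).filter (fun i => 2 * i + 3 < k) = Finset.range ((k - 2) / 2) := by
    ext i
    simp only [Finset.mem_filter, Finset.mem_range]
    omega
  rw [e1, e2, Finset.card_range, Finset.card_range]
  omega

lemma two_eq_zero_A : (2 : A) = 0 := by
  have h1 : (2 : Polynomial (ZMod 2)) = 0 := by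
    have h : ((2 : ℕ) : Polynomial (ZMod 2)) = 0 := by
      rw [← Polynomial.C_eq_natCast]
      have h2 : ((2 : ℕ) : ZMod 2) = 0 := by decide
      rw [h2, map_zero]
    simpa using h
  have h2 : (2 : A) = AdjoinRoot.of curveEq 2 := (map_ofNat _ 2).symm
  rw [h2, h1, map_zero]

end AuxASide

section AuxKSide

lemma two_eq_zero_K : (2 : K) = 0 := by
  have h2 : (2 : K) = algebraMap A K 2 := (map_ofNat _ 2).symm
  rw [h2, two_eq_zero_A, map_zero]

lemma charPK : CharP K 2 := by
  rw [CharP.charP_iff_prime_eq_zero Nat.prime_two]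
  have := two_eq_zero_K K
  simpa using this

lemma pPoly_coeff (k n : ℕ) : (pPoly K k).coeff n =
    ∑ j ∈ Finset.range (k + 1),
      if 2 ^ j = n then aSeq K j * bSeq K (k - j) ^ 2 ^ j else 0 := by
  rw [pPoly, Polynomial.finset_sum_coeff]
  refine Finset.sum_congr rfl fun j _ => ?_
  rw [Polynomial.coeff_C_mul, Polynomial.coeff_X_pow]
  rcases eq_or_ne (2 ^ j) n with h | h
  · simp [h]
  · simp [if_neg h, if_neg (Ne.symm h)]

lemma pPoly_coeff_pow (k m : ℕ) (hm : m ≤ k) :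
    (pPoly K k).coeff (2 ^ m) = aSeq K m * bSeq K (k - m) ^ 2 ^ m := by
  rw [pPoly_coeff]
  rw [Finset.sum_eq_single_of_mem m (Finset.mem_range.mpr (by omega))]
  · rw [if_pos rfl]
  · intro j _ hne
    exact if_neg (fun h => hne (Nat.pow_right_injective (le_refl 2) h))

lemma pPoly_coeff_zero (k n : ℕ) (hn : ∀ j, j ≤ k → n ≠ 2 ^ j) :
    (pPoly K k).coeff n = 0 := by
  rw [pPoly_coeff]
  refine Finset.sum_eq_zero fun j hj => ?_
  exact if_neg (fun h => hn j (by simp at hj; omega) h.symm)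

end AuxKSide

/-- Fix `k ≥ 2` and let `B_{k,k-2}` be the coefficient of `w^{2^{k-2}}` in
`e_k(w)`.  If `e_k(w)` divides `p_k(w)` in `K[w]`, then the quotient
`R_k = p_k/e_k` satisfies `R_k = a_k·e_k + C` with
`C = a_{k-1} + a_k·B_{k,k-2}²`; equivalently
`p_k = a_k·e_k² + (a_{k-1} + a_k·B_{k,k-2}²)·e_k`. -/
theorem stmt9 [IsFractionRing A K] (k : ℕ) (hk : 2 ≤ k)
    (hdvd : (ePoly k).map (algebraMap A K) ∣ pPoly K k) :
    (∀ R : Polynomial K,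
      pPoly K k = (ePoly k).map (algebraMap A K) * R →
        R = C (aSeq K k) * (ePoly k).map (algebraMap A K) +
          C (aSeq K (k - 1) +
            aSeq K k * (algebraMap A K ((ePoly k).coeff (2 ^ (k - 2)))) ^ 2)) ∧
    pPoly K k =
      C (aSeq K k) * ((ePoly k).map (algebraMap A K)) ^ 2 +
        C (aSeq K (k - 1) +
            aSeq K k * (algebraMap A K ((ePoly k).coeff (2 ^ (k - 2)))) ^ 2) *
          (ePoly k).map (algebraMap A K) := by
  classical
  haveI hchar : CharP K 2 := charPK K
  set φ := algebraMap A K with hφdef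
  have hφ : Function.Injective φ := IsFractionRing.injective A K
  set E : Polynomial K := (ePoly k).map φ with hE
  have hAlt : Alt k = sumSet (monoSet k) := rfl
  have hEeq : E = prodLin (sumSet ((monoSet k).image φ)) := by
    rw [hE, ePoly, Polynomial.map_prod, prodLin, sumSet_image φ hφ, hAlt]
    rw [Finset.prod_image (fun a _ b _ h => hφ h)]
    refine Finset.prod_congr rfl fun a _ => ?_
    simp
  have hindepT : IndepSet ((monoSet k).image φ) := indep_image φ hφ _ (indep_monoSet k)
  obtain ⟨hcardV, hsupp⟩ := main_ind _ hindepT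
  have hcardT : ((monoSet k).image φ).card = k - 1 := by
    rw [Finset.card_image_of_injOn (fun a _ b _ h => hφ h), card_monoSet k hk]
  have hmonic : E.Monic := by rw [hEeq]; exact prodLin_monic _
  have hdeg : E.natDegree = 2 ^ (k - 1) := by
    rw [hEeq, prodLin_natDegree, hcardV, hcardT]
  have hsuppE : ∀ i, E.coeff i ≠ 0 → ∃ j, i = 2 ^ j := by
    rw [hEeq]; exact hsupp
  set B : K := φ ((ePoly k).coeff (2 ^ (k - 2))) with hBdef
  have hBc : E.coeff (2 ^ (k - 2)) = B := by rw [hE, Polynomial.coeff_map]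
  set c : K := aSeq K (k - 1) + aSeq K k * B ^ 2 with hcdef
  have h2k1 : 2 ^ (k - 1) = 2 * 2 ^ (k - 2) := by
    conv_lhs => rw [show k - 1 = (k - 2) + 1 from by omega]
    rw [pow_succ']
  have h2k : 2 ^ k = 2 * 2 ^ (k - 1) := by
    conv_lhs => rw [show k = (k - 1) + 1 from by omega]
    rw [pow_succ']
  have hEtop : E.coeff (2 ^ (k - 1)) = 1 := by
    rw [← hdeg]; exact hmonic.coeff_natDegree
  have hEhigh : ∀ m, 2 ^ (k - 1) < m → E.coeff m = 0 := by
    intro m hm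
    exact Polynomial.coeff_eq_zero_of_natDegree_lt (by rw [hdeg]; exact hm)
  have hr : ∀ n, 2 ^ (k - 1) ≤ n →
      (pPoly K k - (C (aSeq K k) * E ^ 2 + C c * E)).coeff n = 0 := by
    intro n hn
    rw [Polynomial.coeff_sub, Polynomial.coeff_add, Polynomial.coeff_C_mul,
      Polynomial.coeff_C_mul, coeff_sq]
    by_cases hpow : ∃ j, n = 2 ^ j
    · obtain ⟨j, rfl⟩ := hpow
      have hj : k - 1 ≤ j := by
        by_contra hlt
        push_neg at hlt
        have := Nat.pow_lt_pow_right (by norm_num : 1 < 2) hlt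
        omega
      rcases Nat.lt_or_ge j k with hjlt | hjge
      · have hje : j = k - 1 := by omega
        subst hje
        have hp : (pPoly K k).coeff (2 ^ (k - 1)) = aSeq K (k - 1) := by
          rw [pPoly_coeff_pow K k (k - 1) (by omega),
            show k - (k - 1) = 1 from by omega,
            show bSeq K 1 = (1 : K) from rfl, one_pow, mul_one]
        rw [hp, if_pos ⟨2 ^ (k - 2), h2k1⟩, h2k1,
          Nat.mul_div_cancel_left _ (by norm_num : 0 < 2), hBc, ← h2k1, hEtop]
        rw [hcdef]
        linear_combination (-(aSeq K k * B ^ 2)) * (two_zero (F := K))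
      · rcases Nat.eq_or_lt_of_le hjge with hje | hjgt
        · subst hje
          have hp : (pPoly K k).coeff (2 ^ k) = aSeq K k := by
            rw [pPoly_coeff_pow K k k (le_refl k), Nat.sub_self,
              show bSeq K 0 = (1 : K) from rfl, one_pow, mul_one]
          have hlt1 : 2 ^ (k - 1) < 2 ^ k :=
            Nat.pow_lt_pow_right (by norm_num : 1 < 2) (by omega)
          rw [hp, if_pos ⟨2 ^ (k - 1), h2k⟩, h2k,
            Nat.mul_div_cancel_left _ (by norm_num : 0 < 2), hEtop,
            hEhigh _ (by rw [← h2k]; exact hlt1)]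
          ring
        · have hp : (pPoly K k).coeff (2 ^ j) = 0 := by
            refine pPoly_coeff_zero K k _ (fun j' hj' h => ?_)
            have := Nat.pow_right_injective (le_refl 2) h
            omega
          have hj1 : 2 ^ j = 2 * 2 ^ (j - 1) := by
            conv_lhs => rw [show j = (j - 1) + 1 from by omega]
            rw [pow_succ']
          have hlt1 : 2 ^ (k - 1) < 2 ^ (j - 1) :=
            Nat.pow_lt_pow_right (by norm_num : 1 < 2) (by omega)
          have hlt2 : 2 ^ (k - 1) < 2 ^ j :=
            Nat.pow_lt_pow_right (by norm_num : 1 < 2) (by omega)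
          rw [hp, if_pos ⟨2 ^ (j - 1), hj1⟩, hj1,
            Nat.mul_div_cancel_left _ (by norm_num : 0 < 2),
            hEhigh _ hlt1, hEhigh _ (by rw [← hj1]; exact hlt2)]
          ring
    · have hp : (pPoly K k).coeff n = 0 :=
        pPoly_coeff_zero K k n (fun j _ h => hpow ⟨j, h⟩)
      have hE0 : E.coeff n = 0 := by
        by_contra h
        exact hpow (hsuppE n h)
      by_cases h2 : 2 ∣ n
      · rw [if_pos h2]
        have hhalf : E.coeff (n / 2) = 0 := by
          by_contra h
          obtain ⟨j, hj⟩ := hsuppE _ h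
          refine hpow ⟨j + 1, ?_⟩
          obtain ⟨m, rfl⟩ := h2
          rw [Nat.mul_div_cancel_left m (by norm_num : 0 < 2)] at hj
          rw [pow_succ', ← hj]
        rw [hp, hE0, hhalf]
        ring
      · rw [if_neg h2, hp, hE0]
        ring
  have hne : E ≠ 0 := hmonic.ne_zero
  have hdvd2 : E ∣ C (aSeq K k) * E ^ 2 + C c * E := ⟨C (aSeq K k) * E + C c, by ring⟩
  have key : pPoly K k = C (aSeq K k) * E ^ 2 + C c * E := by
    by_contra hneq
    have hrne : pPoly K k - (C (aSeq K k) * E ^ 2 + C c * E) ≠ 0 := sub_ne_zero.mpr hneq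
    have hdr : E ∣ pPoly K k - (C (aSeq K k) * E ^ 2 + C c * E) := dvd_sub hdvd hdvd2
    have hdle := Polynomial.natDegree_le_of_dvd hdr hrne
    have hzero := hr _ (le_trans (le_of_eq hdeg.symm) hdle)
    exact hrne (Polynomial.leadingCoeff_eq_zero.mp hzero)
  refine ⟨?_, key⟩
  intro R hR
  have hmul : E * R = E * (C (aSeq K k) * E + C c) := by rw [← hR, key]; ring
  exact mul_left_cancel₀ hne hmul
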